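/- arXiv:1008.2112 — 3 statements merged into one kernel-verified Lean document; each statement's English description precedes it below -/
import Mathlib

section
/- Every delayful resumption is committed: for all r : res, ⇕ r holds. (In the paper this is proved classically, using the instance of excluded middle stating that convergence is decidable: for all r, (∃ r', r ⇓ r') ∨ ¬(∃ r', r ⇓ r').) -/
/-! Core definitions: delayful resumptions as an M-type, strong bisimilarity,
convergence, divergence, responsiveness, committedness, weak bisimilarities. -/

abbrev state := String → ℤ

/-- Shapes of the polynomial functor for delayful resumptions. -/
inductive RShape where
  | ret (σ : state)
  | inp
  | out (v : ℤ)
  | delay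

/-- The polynomial functor X ↦ state ⊕ (ℤ → X) ⊕ (ℤ × X) ⊕ X. -/
def ResPF : PFunctor :=
  ⟨RShape, fun s => match s with
    | .ret _ => PEmpty
    | .inp => ℤ
    | .out _ => PUnit
    | .delay => PUnit⟩

/-- Delayful resumptions: the final coalgebra (M-type) of `ResPF`. -/
def Res : Type := ResPF.M

namespace Res

def ret (σ : state) : Res := PFunctor.M.mk ⟨RShape.ret σ, PEmpty.elim⟩

def inp (f : ℤ → Res) : Res := PFunctor.M.mk ⟨RShape.inp, f⟩

def out (v : ℤ) (r : Res) : Res := PFunctor.M.mk ⟨RShape.out v, fun _ => r⟩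

def delay (r : Res) : Res := PFunctor.M.mk ⟨RShape.delay, fun _ => r⟩

/-- The silently diverging resumption ⊥, satisfying ⊥ = δ ⊥. -/
def bot : Res := PFunctor.M.corec (fun _ : Unit => ⟨RShape.delay, fun _ => ()⟩) ()

end Res

/-- One step of strong bisimilarity. -/
def BisimF (R : Res → Res → Prop) (r r₁ : Res) : Prop :=
  (∃ σ, r = Res.ret σ ∧ r₁ = Res.ret σ) ∨
  (∃ f f₁, r = Res.inp f ∧ r₁ = Res.inp f₁ ∧ ∀ v, R (f v) (f₁ v)) ∨
  (∃ v a a₁, r = Res.out v a ∧ r₁ = Res.out v a₁ ∧ R a a₁) ∨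
  (∃ a a₁, r = Res.delay a ∧ r₁ = Res.delay a₁ ∧ R a a₁)

/-- Strong bisimilarity ≅: the greatest relation closed under `BisimF`. -/
def Bisim (r r₁ : Res) : Prop :=
  ∃ R : Res → Res → Prop, (∀ x y, R x y → BisimF R x y) ∧ R r r₁

/-- Convergence r ⇓ r': r converges in finitely many delay steps to a
resumption that has terminated or performs an observable action. -/
inductive Conv : Res → Res → Prop where
  | ret (σ : state) : Conv (Res.ret σ) (Res.ret σ)
  | inp {f f₁ : ℤ → Res} : (∀ v, Bisim (f v) (f₁ v)) → Conv (Res.inp f) (Res.inp f₁)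
  | out {v : ℤ} {r r₁ : Res} : Bisim r r₁ → Conv (Res.out v r) (Res.out v r₁)
  | delay {r r' : Res} : Conv r r' → Conv (Res.delay r) r'

/-- Divergence r ⇑: r silently diverges (greatest predicate with δ r ⇑ whenever r ⇑). -/
def Diverge (r : Res) : Prop :=
  ∃ P : Res → Prop, (∀ x, P x → ∃ x', x = Res.delay x' ∧ P x') ∧ P r

/-- One step of responsiveness. -/
def RespF (P : Res → Prop) (r : Res) : Prop :=
  (∃ σ, Conv r (Res.ret σ)) ∨
  (∃ f, Conv r (Res.inp f) ∧ ∀ v, P (f v)) ∨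
  (∃ v r', Conv r (Res.out v r') ∧ P r')

/-- Responsiveness ↓↓ r: the greatest predicate closed under `RespF`. -/
def Resp (r : Res) : Prop :=
  ∃ P : Res → Prop, (∀ x, P x → RespF P x) ∧ P r

/-- One step of committedness: responsiveness with a divergence option. -/
def CommF (P : Res → Prop) (r : Res) : Prop :=
  (∃ σ, Conv r (Res.ret σ)) ∨
  (∃ f, Conv r (Res.inp f) ∧ ∀ v, P (f v)) ∨
  (∃ v r', Conv r (Res.out v r') ∧ P r') ∨
  Diverge r

/-- Committedness ⇕ r: the greatest predicate closed under `CommF`. -/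
def Comm (r : Res) : Prop :=
  ∃ P : Res → Prop, (∀ x, P x → CommF P x) ∧ P r

/-- One step of (termination-sensitive) weak bisimilarity. -/
def WBisimF (R : Res → Res → Prop) (r r₁ : Res) : Prop :=
  (∃ σ, Conv r (Res.ret σ) ∧ Conv r₁ (Res.ret σ)) ∨
  (∃ f f₁, Conv r (Res.inp f) ∧ Conv r₁ (Res.inp f₁) ∧ ∀ v, R (f v) (f₁ v)) ∨
  (∃ v a a₁, Conv r (Res.out v a) ∧ Conv r₁ (Res.out v a₁) ∧ R a a₁) ∨
  (∃ a a₁, r = Res.delay a ∧ r₁ = Res.delay a₁ ∧ R a a₁)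

/-- Weak bisimilarity ≈: the greatest relation closed under `WBisimF`. -/
def WBisim (r r₁ : Res) : Prop :=
  ∃ R : Res → Res → Prop, (∀ x y, R x y → WBisimF R x y) ∧ R r r₁

/-- The inductive part ≈↓(X) of the second formulation of weak bisimilarity. -/
inductive WBisimI (X : Res → Res → Prop) : Res → Res → Prop where
  | ret (σ : state) : WBisimI X (Res.ret σ) (Res.ret σ)
  | out {v r r₁} : X r r₁ → WBisimI X (Res.out v r) (Res.out v r₁)
  | inp {f f₁} : (∀ v, X (f v) (f₁ v)) → WBisimI X (Res.inp f) (Res.inp f₁)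
  | delayL {r r₁} : WBisimI X r r₁ → WBisimI X (Res.delay r) r₁
  | delayR {r r₁} : WBisimI X r r₁ → WBisimI X r (Res.delay r₁)

/-- One step of the second (Mendler-style) formulation ≈° of weak bisimilarity. -/
def WBisimOF (R : Res → Res → Prop) (r r₁ : Res) : Prop :=
  (∃ X : Res → Res → Prop, (∀ x y, X x y → R x y) ∧ WBisimI X r r₁) ∨
  (∃ a a₁, r = Res.delay a ∧ r₁ = Res.delay a₁ ∧ R a a₁)

/-- The second formulation ≈° of weak bisimilarity (induction nested into coinduction). -/
def WBisimO (r r₁ : Res) : Prop :=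
  ∃ R : Res → Res → Prop, (∀ x y, R x y → WBisimOF R x y) ∧ R r r₁

/-- One step of classical-style weak bisimilarity. -/
def WBisimClF (R : Res → Res → Prop) (r r₁ : Res) : Prop :=
  (∃ σ, Conv r (Res.ret σ) ∧ Conv r₁ (Res.ret σ)) ∨
  (∃ v a a₁, Conv r (Res.out v a) ∧ Conv r₁ (Res.out v a₁) ∧ R a a₁) ∨
  (∃ f f₁, Conv r (Res.inp f) ∧ Conv r₁ (Res.inp f₁) ∧ ∀ v, R (f v) (f₁ v)) ∨
  (Diverge r ∧ Diverge r₁)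

/-- Classical-style weak bisimilarity ≈c. -/
def WBisimCl (r r₁ : Res) : Prop :=
  ∃ R : Res → Res → Prop, (∀ x y, R x y → WBisimClF R x y) ∧ R r r₁

/-- Every resumption has one of the four forms. -/
lemma Res.cases_form (x : Res) :
    (∃ σ, x = Res.ret σ) ∨ (∃ f, x = Res.inp f) ∨
    (∃ v a, x = Res.out v a) ∨ (∃ a, x = Res.delay a) := by
  obtain ⟨⟨s, f⟩, rfl⟩ : ∃ p, PFunctor.M.mk p = x := ⟨_, PFunctor.M.mk_dest x⟩
  cases s with
  | ret σ =>
    left; exact ⟨σ, by unfold Res.ret; rw [show f = PEmpty.elim from funext fun e => e.elim]⟩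
  | inp => right; left; exact ⟨f, rfl⟩
  | out v =>
    right; right; left
    exact ⟨v, f PUnit.unit, by unfold Res.out; rw [← show f = fun _ => f PUnit.unit from funext fun _ => rfl]⟩
  | delay =>
    right; right; right
    exact ⟨f PUnit.unit, by unfold Res.delay; rw [← show f = fun _ => f PUnit.unit from funext fun _ => rfl]⟩

lemma Bisim.refl (x : Res) : Bisim x x := by
  refine ⟨Eq, fun a b hab => ?_, rfl⟩
  subst hab
  rcases Res.cases_form a with ⟨σ, rfl⟩ | ⟨f, rfl⟩ | ⟨v, r, rfl⟩ | ⟨r, rfl⟩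
  · exact Or.inl ⟨σ, rfl, rfl⟩
  · exact Or.inr (Or.inl ⟨f, f, rfl, rfl, fun _ => rfl⟩)
  · exact Or.inr (Or.inr (Or.inl ⟨v, r, r, rfl, rfl, rfl⟩))
  · exact Or.inr (Or.inr (Or.inr ⟨r, r, rfl, rfl, rfl⟩))

/-- Every delayful resumption is committed. -/
theorem every_resumption_committed : ∀ r : Res, Comm r := by
  intro r
  refine ⟨fun _ => True, fun x _ => ?_, trivial⟩
  by_cases hc : ∃ r', Conv x r'
  · obtain ⟨r', hr'⟩ := hc
    induction hr' with
    | ret σ => exact Or.inl ⟨σ, Conv.ret σ⟩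
    | @inp f f₁ h =>
      exact Or.inr (Or.inl ⟨f₁, Conv.inp h, fun _ => trivial⟩)
    | @out v a a₁ h =>
      exact Or.inr (Or.inr (Or.inl ⟨v, a₁, Conv.out h, trivial⟩))
    | @delay a a' _ ih =>
      rcases ih trivial with ⟨σ, h⟩ | ⟨f, h, _⟩ | ⟨v, b, h, _⟩ | hdiv
      · exact Or.inl ⟨σ, Conv.delay h⟩
      · exact Or.inr (Or.inl ⟨f, Conv.delay h, fun _ => trivial⟩)
      · exact Or.inr (Or.inr (Or.inl ⟨v, b, Conv.delay h, trivial⟩))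
      · -- a diverges, so delay a diverges
        obtain ⟨P, hP, hPa⟩ := hdiv
        exact Or.inr (Or.inr (Or.inr ⟨fun y => P y ∨ y = Res.delay a,
          fun y hy => by
            rcases hy with hy | rfl
            · obtain ⟨y', rfl, hy'⟩ := hP y hy
              exact ⟨y', rfl, Or.inl hy'⟩
            · exact ⟨a, rfl, Or.inl hPa⟩, Or.inr rfl⟩))
  · refine Or.inr (Or.inr (Or.inr ⟨fun y => ¬∃ r', Conv y r', fun y hy => ?_, hc⟩))
    rcases Res.cases_form y with ⟨σ, rfl⟩ | ⟨f, rfl⟩ | ⟨v, a, rfl⟩ | ⟨a, rfl⟩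
    · exact absurd ⟨_, Conv.ret σ⟩ hy
    · exact absurd ⟨_, Conv.inp fun v => Bisim.refl (f v)⟩ hy
    · exact absurd ⟨_, Conv.out (Bisim.refl a)⟩ hy
    · exact ⟨a, rfl, fun ⟨r', hr'⟩ => hy ⟨r', Conv.delay hr'⟩⟩
end

section
/- Convergence, divergence, responsiveness and committedness are setoid predicates, i.e. invariant under strong bisimilarity: if r ≅ r₁ then (i) if r ⇓ r' then there exists r₁' with r₁ ⇓ r₁' and r' ≅ r₁'; (ii) if r ⇑ then r₁ ⇑; (iii) if ↓↓ r then ↓↓ r₁; (iv) if ⇕ r then ⇕ r₁. -/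
section Aux

open Res

lemma mk_injective : Function.Injective (PFunctor.M.mk : ResPF ResPF.M → ResPF.M) :=
  fun a b h => by
    have := congrArg PFunctor.M.dest h
    rwa [PFunctor.M.dest_mk, PFunctor.M.dest_mk] at this

lemma shape_cases (x : Res) :
    (∃ σ, x = ret σ) ∨ (∃ f, x = inp f) ∨ (∃ v a, x = out v a) ∨ (∃ a, x = delay a) := by
  obtain ⟨⟨s, g⟩, hx⟩ : ∃ p, x = PFunctor.M.mk p := ⟨_, (PFunctor.M.mk_dest x).symm⟩
  cases s with
  | ret σ =>
    left; exact ⟨σ, by rw [hx]; unfold Res.ret; congr; funext p; exact p.elim⟩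
  | inp => right; left; exact ⟨g, hx⟩
  | out v =>
    right; right; left
    exact ⟨v, g PUnit.unit, by rw [hx]; unfold Res.out; congr⟩
  | delay =>
    right; right; right
    exact ⟨g PUnit.unit, by rw [hx]; unfold Res.delay; congr⟩

lemma ret_inj {σ σ'} (h : Res.ret σ = Res.ret σ') : σ = σ' := by
  have := mk_injective h
  injection this with h1 _
  injection h1

lemma inp_inj {f g} (h : Res.inp f = Res.inp g) : f = g := by
  have := mk_injective h
  injection this

lemma out_inj {v w a b} (h : Res.out v a = Res.out w b) : v = w ∧ a = b := by
  have := mk_injective h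
  injection this with h1 h2
  injection h1 with hv
  subst hv
  exact ⟨rfl, congrFun h2 PUnit.unit⟩

lemma delay_inj {a b} (h : Res.delay a = Res.delay b) : a = b := by
  have := mk_injective h
  injection this with _ h2
  exact congrFun h2 PUnit.unit

lemma shape_fst {x : Res} {p : ResPF ResPF.M} (h : x = PFunctor.M.mk p) : True := trivial

lemma ret_ne_inp {σ f} : Res.ret σ ≠ Res.inp f := fun h => by
  have := mk_injective h; injection this with h1 _; exact RShape.noConfusion h1
lemma ret_ne_out {σ v a} : Res.ret σ ≠ Res.out v a := fun h => by
  have := mk_injective h; injection this with h1 _; exact RShape.noConfusion h1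
lemma ret_ne_delay {σ a} : Res.ret σ ≠ Res.delay a := fun h => by
  have := mk_injective h; injection this with h1 _; exact RShape.noConfusion h1
lemma inp_ne_out {f v a} : Res.inp f ≠ Res.out v a := fun h => by
  have := mk_injective h; injection this with h1 _; exact RShape.noConfusion h1
lemma inp_ne_delay {f a} : Res.inp f ≠ Res.delay a := fun h => by
  have := mk_injective h; injection this with h1 _; exact RShape.noConfusion h1
lemma out_ne_delay {v a b} : Res.out v a ≠ Res.delay b := fun h => by
  have := mk_injective h; injection this with h1 _; exact RShape.noConfusion h1

lemma bisim_dest {r r₁ : Res} (h : Bisim r r₁) : BisimF Bisim r r₁ := by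
  obtain ⟨R, hR, hr⟩ := h
  have sub : ∀ x y, R x y → Bisim x y := fun x y hxy => ⟨R, hR, hxy⟩
  rcases hR _ _ hr with ⟨σ, h1, h2⟩ | ⟨f, f₁, h1, h2, h3⟩ | ⟨v, a, a₁, h1, h2, h3⟩ |
    ⟨a, a₁, h1, h2, h3⟩
  · exact Or.inl ⟨σ, h1, h2⟩
  · exact Or.inr (Or.inl ⟨f, f₁, h1, h2, fun v => sub _ _ (h3 v)⟩)
  · exact Or.inr (Or.inr (Or.inl ⟨v, a, a₁, h1, h2, sub _ _ h3⟩))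
  · exact Or.inr (Or.inr (Or.inr ⟨a, a₁, h1, h2, sub _ _ h3⟩))

lemma bisim_refl (r : Res) : Bisim r r := by
  refine ⟨Eq, ?_, rfl⟩
  rintro x _ rfl
  rcases shape_cases x with ⟨σ, rfl⟩ | ⟨f, rfl⟩ | ⟨v, a, rfl⟩ | ⟨a, rfl⟩
  · exact Or.inl ⟨σ, rfl, rfl⟩
  · exact Or.inr (Or.inl ⟨f, f, rfl, rfl, fun _ => rfl⟩)
  · exact Or.inr (Or.inr (Or.inl ⟨v, a, a, rfl, rfl, rfl⟩))
  · exact Or.inr (Or.inr (Or.inr ⟨a, a, rfl, rfl, rfl⟩))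

lemma bisim_symm {r r₁ : Res} (h : Bisim r r₁) : Bisim r₁ r := by
  refine ⟨fun x y => Bisim y x, ?_, h⟩
  intro x y hxy
  rcases bisim_dest hxy with ⟨σ, h1, h2⟩ | ⟨f, f₁, h1, h2, h3⟩ | ⟨v, a, a₁, h1, h2, h3⟩ |
    ⟨a, a₁, h1, h2, h3⟩
  · exact Or.inl ⟨σ, h2, h1⟩
  · exact Or.inr (Or.inl ⟨f₁, f, h2, h1, fun v => h3 v⟩)
  · exact Or.inr (Or.inr (Or.inl ⟨v, a₁, a, h2, h1, h3⟩))
  · exact Or.inr (Or.inr (Or.inr ⟨a₁, a, h2, h1, h3⟩))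

lemma bisim_trans {r s t : Res} (h1 : Bisim r s) (h2 : Bisim s t) : Bisim r t := by
  refine ⟨fun x z => ∃ y, Bisim x y ∧ Bisim y z, ?_, s, h1, h2⟩
  rintro x z ⟨y, hxy, hyz⟩
  rcases bisim_dest hxy with ⟨σ, hx, hy⟩ | ⟨f, g, hx, hy, hfg⟩ | ⟨v, a, b, hx, hy, hab⟩ |
    ⟨a, b, hx, hy, hab⟩ <;>
  rcases bisim_dest hyz with ⟨σ', hy', hz⟩ | ⟨g', g₂, hy', hz, hg⟩ | ⟨v', b', c, hy', hz, hbc⟩ |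
    ⟨b', c, hy', hz, hbc⟩ <;>
  (try exact (ret_ne_inp (hy.symm.trans hy')).elim) <;>
  (try exact (ret_ne_out (hy.symm.trans hy')).elim) <;>
  (try exact (ret_ne_delay (hy.symm.trans hy')).elim) <;>
  (try exact (inp_ne_out (hy.symm.trans hy')).elim) <;>
  (try exact (inp_ne_delay (hy.symm.trans hy')).elim) <;>
  (try exact (out_ne_delay (hy.symm.trans hy')).elim) <;>
  (try exact (ret_ne_inp (hy'.symm.trans hy)).elim) <;>
  (try exact (ret_ne_out (hy'.symm.trans hy)).elim) <;>
  (try exact (ret_ne_delay (hy'.symm.trans hy)).elim) <;>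
  (try exact (inp_ne_out (hy'.symm.trans hy)).elim) <;>
  (try exact (inp_ne_delay (hy'.symm.trans hy)).elim) <;>
  (try exact (out_ne_delay (hy'.symm.trans hy)).elim)
  · refine Or.inl ⟨σ, hx, ?_⟩
    rw [hz, ← ret_inj (hy.symm.trans hy')]
  · have hgg : g = g' := inp_inj (hy.symm.trans hy')
    subst hgg
    exact Or.inr (Or.inl ⟨f, g₂, hx, hz, fun v => ⟨g v, hfg v, hg v⟩⟩)
  · obtain ⟨hv, hb⟩ := out_inj (hy.symm.trans hy')
    subst hv; subst hb
    exact Or.inr (Or.inr (Or.inl ⟨v, a, c, hx, hz, b, hab, hbc⟩))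
  · have hb : b = b' := delay_inj (hy.symm.trans hy')
    exact Or.inr (Or.inr (Or.inr ⟨a, c, hx, hz, b, hab, hb ▸ hbc⟩))

/-- Inversion: bisimilar to a `ret`. -/
lemma bisim_ret {σ s} (h : Bisim (Res.ret σ) s) : s = Res.ret σ := by
  rcases bisim_dest h with ⟨σ', h1, h2⟩ | ⟨f, f₁, h1, _⟩ | ⟨v, a, a₁, h1, _⟩ | ⟨a, a₁, h1, _⟩
  · rw [h2, ret_inj h1]
  · exact absurd h1 ret_ne_inp
  · exact absurd h1 ret_ne_out
  · exact absurd h1 ret_ne_delay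

lemma bisim_inp {f s} (h : Bisim (Res.inp f) s) :
    ∃ g, s = Res.inp g ∧ ∀ v, Bisim (f v) (g v) := by
  rcases bisim_dest h with ⟨σ', h1, _⟩ | ⟨f', f₁, h1, h2, h3⟩ | ⟨v, a, a₁, h1, _⟩ |
    ⟨a, a₁, h1, _⟩
  · exact absurd h1.symm ret_ne_inp
  · exact ⟨f₁, h2, by rw [inp_inj h1]; exact h3⟩
  · exact absurd h1.symm (fun h => inp_ne_out h.symm)
  · exact absurd h1.symm (fun h => inp_ne_delay h.symm)

lemma bisim_out {v a s} (h : Bisim (Res.out v a) s) :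
    ∃ b, s = Res.out v b ∧ Bisim a b := by
  rcases bisim_dest h with ⟨σ', h1, _⟩ | ⟨f', f₁, h1, _⟩ | ⟨v', a', a₁, h1, h2, h3⟩ |
    ⟨a', a₁, h1, _⟩
  · exact absurd h1.symm ret_ne_out
  · exact absurd h1.symm inp_ne_out
  · obtain ⟨hv, ha⟩ := out_inj h1
    exact ⟨a₁, hv ▸ h2, ha ▸ h3⟩
  · exact absurd h1 out_ne_delay

lemma bisim_delay {a s} (h : Bisim (Res.delay a) s) :
    ∃ b, s = Res.delay b ∧ Bisim a b := by
  rcases bisim_dest h with ⟨σ', h1, _⟩ | ⟨f', f₁, h1, _⟩ | ⟨v', a', a₁, h1, _⟩ |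
    ⟨a', a₁, h1, h2, h3⟩
  · exact absurd h1.symm ret_ne_delay
  · exact absurd h1.symm inp_ne_delay
  · exact absurd h1.symm out_ne_delay
  · exact ⟨a₁, h2, (delay_inj h1) ▸ h3⟩

lemma bisim_inp_intro {f g : ℤ → Res} (h : ∀ v, Bisim (f v) (g v)) :
    Bisim (Res.inp f) (Res.inp g) := by
  refine ⟨fun x y => (∃ f' g', x = Res.inp f' ∧ y = Res.inp g' ∧ ∀ v, Bisim (f' v) (g' v)) ∨
    Bisim x y, ?_, Or.inl ⟨f, g, rfl, rfl, h⟩⟩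
  rintro x y (⟨f', g', rfl, rfl, hfg⟩ | hb)
  · exact Or.inr (Or.inl ⟨f', g', rfl, rfl, fun v => Or.inr (hfg v)⟩)
  · rcases bisim_dest hb with ⟨σ, h1, h2⟩ | ⟨f', g', h1, h2, h3⟩ | ⟨v, a, b, h1, h2, h3⟩ |
      ⟨a, b, h1, h2, h3⟩
    · exact Or.inl ⟨σ, h1, h2⟩
    · exact Or.inr (Or.inl ⟨f', g', h1, h2, fun v => Or.inr (h3 v)⟩)
    · exact Or.inr (Or.inr (Or.inl ⟨v, a, b, h1, h2, Or.inr h3⟩))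
    · exact Or.inr (Or.inr (Or.inr ⟨a, b, h1, h2, Or.inr h3⟩))

lemma bisim_out_intro {v : ℤ} {a b : Res} (h : Bisim a b) :
    Bisim (Res.out v a) (Res.out v b) := by
  refine ⟨fun x y => (∃ v' a' b', x = Res.out v' a' ∧ y = Res.out v' b' ∧ Bisim a' b') ∨
    Bisim x y, ?_, Or.inl ⟨v, a, b, rfl, rfl, h⟩⟩
  rintro x y (⟨v', a', b', rfl, rfl, hab⟩ | hb)
  · exact Or.inr (Or.inr (Or.inl ⟨v', a', b', rfl, rfl, Or.inr hab⟩))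
  · rcases bisim_dest hb with ⟨σ, h1, h2⟩ | ⟨f', g', h1, h2, h3⟩ | ⟨w, c, d, h1, h2, h3⟩ |
      ⟨c, d, h1, h2, h3⟩
    · exact Or.inl ⟨σ, h1, h2⟩
    · exact Or.inr (Or.inl ⟨f', g', h1, h2, fun u => Or.inr (h3 u)⟩)
    · exact Or.inr (Or.inr (Or.inl ⟨w, c, d, h1, h2, Or.inr h3⟩))
    · exact Or.inr (Or.inr (Or.inr ⟨c, d, h1, h2, Or.inr h3⟩))

/-- Part (i) as a standalone lemma. -/
lemma conv_bisim {r r₁ r' : Res} (hc : Conv r r') (h : Bisim r r₁) :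
    ∃ r₁', Conv r₁ r₁' ∧ Bisim r' r₁' := by
  induction hc generalizing r₁ with
  | ret σ =>
    rw [bisim_ret h]
    exact ⟨Res.ret σ, Conv.ret σ, bisim_refl _⟩
  | @inp f f₁ hf =>
    obtain ⟨g, rfl, hg⟩ := bisim_inp h
    exact ⟨Res.inp g, Conv.inp (fun v => bisim_refl _),
      bisim_inp_intro (fun v => bisim_trans (bisim_symm (hf v)) (hg v))⟩
  | @out v a a₁ ha =>
    obtain ⟨b, rfl, hb⟩ := bisim_out h
    exact ⟨Res.out v b, Conv.out (bisim_refl _),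
      bisim_out_intro (bisim_trans (bisim_symm ha) hb)⟩
  | @delay a a' hc ih =>
    obtain ⟨b, rfl, hb⟩ := bisim_delay h
    obtain ⟨r₁', hconv, hbis⟩ := ih hb
    exact ⟨r₁', Conv.delay hconv, hbis⟩

lemma diverge_bisim {r r₁ : Res} (hd : Diverge r) (h : Bisim r r₁) : Diverge r₁ := by
  obtain ⟨P, hP, hr⟩ := hd
  refine ⟨fun y => ∃ x, Bisim x y ∧ P x, ?_, r, h, hr⟩
  rintro y ⟨x, hxy, hx⟩
  obtain ⟨x', rfl, hx'⟩ := hP x hx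
  obtain ⟨y', rfl, hy'⟩ := bisim_delay hxy
  exact ⟨y', rfl, x', hy', hx'⟩

end Aux

/-- Convergence, divergence, responsiveness and committedness are
setoid predicates (invariant under strong bisimilarity). -/
theorem conv_div_resp_comm_setoid (r r₁ : Res) (h : Bisim r r₁) :
    (∀ r', Conv r r' → ∃ r₁', Conv r₁ r₁' ∧ Bisim r' r₁') ∧
    (Diverge r → Diverge r₁) ∧
    (Resp r → Resp r₁) ∧
    (Comm r → Comm r₁) := by
  refine ⟨fun r' hc => conv_bisim hc h, fun hd => diverge_bisim hd h, ?_, ?_⟩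
  · rintro ⟨P, hP, hr⟩
    refine ⟨fun y => ∃ x, Bisim x y ∧ P x, ?_, r, h, hr⟩
    rintro y ⟨x, hxy, hx⟩
    rcases hP x hx with ⟨σ, hc⟩ | ⟨f, hc, hf⟩ | ⟨v, a, hc, ha⟩
    · obtain ⟨y', hcy, hb⟩ := conv_bisim hc hxy
      exact Or.inl ⟨σ, (bisim_ret hb) ▸ hcy⟩
    · obtain ⟨y', hcy, hb⟩ := conv_bisim hc hxy
      obtain ⟨g, rfl, hg⟩ := bisim_inp hb
      exact Or.inr (Or.inl ⟨g, hcy, fun v => ⟨f v, hg v, hf v⟩⟩)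
    · obtain ⟨y', hcy, hb⟩ := conv_bisim hc hxy
      obtain ⟨b, rfl, hab⟩ := bisim_out hb
      exact Or.inr (Or.inr ⟨v, b, hcy, a, hab, ha⟩)
  · rintro ⟨P, hP, hr⟩
    refine ⟨fun y => ∃ x, Bisim x y ∧ P x, ?_, r, h, hr⟩
    rintro y ⟨x, hxy, hx⟩
    rcases hP x hx with ⟨σ, hc⟩ | ⟨f, hc, hf⟩ | ⟨v, a, hc, ha⟩ | hd
    · obtain ⟨y', hcy, hb⟩ := conv_bisim hc hxy
      exact Or.inl ⟨σ, (bisim_ret hb) ▸ hcy⟩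
    · obtain ⟨y', hcy, hb⟩ := conv_bisim hc hxy
      obtain ⟨g, rfl, hg⟩ := bisim_inp hb
      exact Or.inr (Or.inl ⟨g, hcy, fun v => ⟨f v, hg v, hf v⟩⟩)
    · obtain ⟨y', hcy, hb⟩ := conv_bisim hc hxy
      obtain ⟨b, rfl, hab⟩ := bisim_out hb
      exact Or.inr (Or.inr (Or.inl ⟨v, b, hcy, a, hab, ha⟩))
    · exact Or.inr (Or.inr (Or.inr (diverge_bisim hd hxy)))
end

section
/- Weak bisimilarity ≈ is an equivalence relation on resumptions: it is reflexive (r ≈ r for all r), symmetric (r ≈ r* implies r* ≈ r), and transitive (r₀ ≈ r₁ and r₁ ≈ r₂ imply r₀ ≈ r₂). -/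
namespace WBProof

open Res

lemma mk_inj {x y : ResPF.Obj Res} (h : (PFunctor.M.mk x : Res) = PFunctor.M.mk y) : x = y := by
  have := congrArg PFunctor.M.dest h
  exact (PFunctor.M.dest_mk (F := ResPF) x).symm.trans (this.trans (PFunctor.M.dest_mk (F := ResPF) y))

lemma shape_cases (r : Res) :
    (∃ σ, r = Res.ret σ) ∨ (∃ f, r = Res.inp f) ∨ (∃ v a, r = Res.out v a) ∨ (∃ a, r = Res.delay a) := by
  obtain ⟨⟨s, c⟩, h⟩ : ∃ x, r = PFunctor.M.mk x := ⟨_, (PFunctor.M.mk_dest r).symm⟩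
  cases s with
  | ret σ =>
    left; exact ⟨σ, by rw [h]; unfold Res.ret; congr; funext x; exact x.elim⟩
  | inp => right; left; exact ⟨c, h⟩
  | out v =>
    right; right; left
    exact ⟨v, c PUnit.unit, by rw [h]; unfold Res.out; congr⟩
  | delay =>
    right; right; right
    exact ⟨c PUnit.unit, by rw [h]; unfold Res.delay; congr⟩

lemma ret_inj {σ σ'} (h : Res.ret σ = Res.ret σ') : σ = σ' := by
  have := mk_inj h; cases this; rfl

lemma inp_inj {f g} (h : Res.inp f = Res.inp g) : f = g := by
  have := mk_inj h
  injection this with h1 h2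

lemma out_inj {v w a b} (h : Res.out v a = Res.out w b) : v = w ∧ a = b := by
  have := mk_inj h
  injection this with h1 h2
  injection h1 with hv
  cases hv
  exact ⟨rfl, congrFun h2 PUnit.unit⟩

lemma delay_inj {a b} (h : Res.delay a = Res.delay b) : a = b := by
  have := mk_inj h
  injection this with h1 h2
  exact congrFun h2 PUnit.unit

lemma ret_ne_inp {σ f} : Res.ret σ ≠ Res.inp f := fun h => by cases congrArg Sigma.fst (mk_inj h)
lemma ret_ne_out {σ v a} : Res.ret σ ≠ Res.out v a := fun h => by cases congrArg Sigma.fst (mk_inj h)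
lemma ret_ne_delay {σ a} : Res.ret σ ≠ Res.delay a := fun h => by cases congrArg Sigma.fst (mk_inj h)
lemma inp_ne_out {f v a} : Res.inp f ≠ Res.out v a := fun h => by cases congrArg Sigma.fst (mk_inj h)
lemma inp_ne_delay {f a} : Res.inp f ≠ Res.delay a := fun h => by cases congrArg Sigma.fst (mk_inj h)
lemma out_ne_delay {v a b} : Res.out v a ≠ Res.delay b := fun h => by cases congrArg Sigma.fst (mk_inj h)

end WBProof
namespace WBProof

lemma bisim_unfold {r r₁} (h : Bisim r r₁) : BisimF Bisim r r₁ := by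
  obtain ⟨R, hR, hr⟩ := h
  have := hR _ _ hr
  rcases this with ⟨σ, h1, h2⟩ | ⟨f, f₁, h1, h2, h3⟩ | ⟨v, a, a₁, h1, h2, h3⟩ | ⟨a, a₁, h1, h2, h3⟩
  · exact Or.inl ⟨σ, h1, h2⟩
  · exact Or.inr (Or.inl ⟨f, f₁, h1, h2, fun v => ⟨R, hR, h3 v⟩⟩)
  · exact Or.inr (Or.inr (Or.inl ⟨v, a, a₁, h1, h2, ⟨R, hR, h3⟩⟩))
  · exact Or.inr (Or.inr (Or.inr ⟨a, a₁, h1, h2, ⟨R, hR, h3⟩⟩))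

lemma bisim_refl (r : Res) : Bisim r r := by
  refine ⟨Eq, fun x y hxy => ?_, rfl⟩
  cases hxy
  rcases shape_cases x with ⟨σ, h⟩ | ⟨f, h⟩ | ⟨v, a, h⟩ | ⟨a, h⟩
  · exact Or.inl ⟨σ, h, h⟩
  · exact Or.inr (Or.inl ⟨f, f, h, h, fun v => rfl⟩)
  · exact Or.inr (Or.inr (Or.inl ⟨v, a, a, h, h, rfl⟩))
  · exact Or.inr (Or.inr (Or.inr ⟨a, a, h, h, rfl⟩))

lemma bisim_symm {r r₁} (h : Bisim r r₁) : Bisim r₁ r := by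
  obtain ⟨R, hR, hr⟩ := h
  refine ⟨fun x y => R y x, fun x y hxy => ?_, hr⟩
  rcases hR _ _ hxy with ⟨σ, h1, h2⟩ | ⟨f, f₁, h1, h2, h3⟩ | ⟨v, a, a₁, h1, h2, h3⟩ | ⟨a, a₁, h1, h2, h3⟩
  · exact Or.inl ⟨σ, h2, h1⟩
  · exact Or.inr (Or.inl ⟨f₁, f, h2, h1, fun v => h3 v⟩)
  · exact Or.inr (Or.inr (Or.inl ⟨v, a₁, a, h2, h1, h3⟩))
  · exact Or.inr (Or.inr (Or.inr ⟨a₁, a, h2, h1, h3⟩))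

lemma bisim_trans {r₀ r₁ r₂} (h : Bisim r₀ r₁) (h' : Bisim r₁ r₂) : Bisim r₀ r₂ := by
  refine ⟨fun x z => ∃ y, Bisim x y ∧ Bisim y z, fun x z hxz => ?_, r₁, h, h'⟩
  obtain ⟨y, hxy, hyz⟩ := hxz
  rcases bisim_unfold hxy with ⟨σ, h1, h2⟩ | ⟨f, f₁, h1, h2, h3⟩ | ⟨v, a, a₁, h1, h2, h3⟩ | ⟨a, a₁, h1, h2, h3⟩
  · subst h1; subst h2
    rcases bisim_unfold hyz with ⟨σ', g1, g2⟩ | ⟨f, f₁, g1, g2, g3⟩ | ⟨v, a, a₁, g1, g2, g3⟩ | ⟨a, a₁, g1, g2, g3⟩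
    · cases ret_inj g1; exact Or.inl ⟨σ, rfl, g2⟩
    · exact absurd g1 ret_ne_inp
    · exact absurd g1 ret_ne_out
    · exact absurd g1 ret_ne_delay
  · subst h1; subst h2
    rcases bisim_unfold hyz with ⟨σ', g1, g2⟩ | ⟨g, g₁, g1, g2, g3⟩ | ⟨v, a, a₁, g1, g2, g3⟩ | ⟨a, a₁, g1, g2, g3⟩
    · exact absurd g1.symm ret_ne_inp
    · cases inp_inj g1
      exact Or.inr (Or.inl ⟨f, g₁, rfl, g2, fun v => ⟨f₁ v, h3 v, g3 v⟩⟩)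
    · exact absurd g1 inp_ne_out
    · exact absurd g1 inp_ne_delay
  · subst h1; subst h2
    rcases bisim_unfold hyz with ⟨σ', g1, g2⟩ | ⟨g, g₁, g1, g2, g3⟩ | ⟨w, b, b₁, g1, g2, g3⟩ | ⟨b, b₁, g1, g2, g3⟩
    · exact absurd g1.symm ret_ne_out
    · exact absurd g1.symm inp_ne_out
    · obtain ⟨hv, hb⟩ := out_inj g1; subst hv; subst hb
      exact Or.inr (Or.inr (Or.inl ⟨v, a, b₁, rfl, g2, ⟨a₁, h3, g3⟩⟩))
    · exact absurd g1 out_ne_delay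
  · subst h1; subst h2
    rcases bisim_unfold hyz with ⟨σ', g1, g2⟩ | ⟨g, g₁, g1, g2, g3⟩ | ⟨w, b, b₁, g1, g2, g3⟩ | ⟨b, b₁, g1, g2, g3⟩
    · exact absurd g1.symm ret_ne_delay
    · exact absurd g1.symm inp_ne_delay
    · exact absurd g1.symm out_ne_delay
    · cases delay_inj g1
      exact Or.inr (Or.inr (Or.inr ⟨a, b₁, rfl, g2, ⟨a₁, h3, g3⟩⟩))

end WBProof
namespace WBProof

lemma conv_ret_inv {σ d} (h : Conv (Res.ret σ) d) : d = Res.ret σ := by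
  generalize hr : Res.ret σ = r at h
  induction h with
  | ret σ' => cases ret_inj hr; rfl
  | inp _ => exact absurd hr ret_ne_inp
  | out _ => exact absurd hr ret_ne_out
  | delay _ _ => exact absurd hr ret_ne_delay

lemma conv_inp_inv {f d} (h : Conv (Res.inp f) d) :
    ∃ f₁, d = Res.inp f₁ ∧ ∀ v, Bisim (f v) (f₁ v) := by
  generalize hr : Res.inp f = r at h
  induction h with
  | ret σ' => exact absurd hr.symm ret_ne_inp
  | @inp g g₁ hb => cases inp_inj hr; exact ⟨g₁, rfl, hb⟩
  | out _ => exact absurd hr inp_ne_out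
  | delay _ _ => exact absurd hr inp_ne_delay

lemma conv_out_inv {v a d} (h : Conv (Res.out v a) d) :
    ∃ a₁, d = Res.out v a₁ ∧ Bisim a a₁ := by
  generalize hr : Res.out v a = r at h
  induction h with
  | ret σ' => exact absurd hr.symm ret_ne_out
  | inp _ => exact absurd hr.symm inp_ne_out
  | @out w b b₁ hb =>
    obtain ⟨hv, hb'⟩ := out_inj hr; subst hv; subst hb'
    exact ⟨b₁, rfl, hb⟩
  | delay _ _ => exact absurd hr out_ne_delay

lemma conv_delay_inv {a d} (h : Conv (Res.delay a) d) : Conv a d := by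
  generalize hr : Res.delay a = r at h
  induction h with
  | ret σ' => exact absurd hr.symm ret_ne_delay
  | inp _ => exact absurd hr.symm inp_ne_delay
  | out _ => exact absurd hr.symm out_ne_delay
  | @delay b d' hc _ => cases delay_inj hr; exact hc

/-- Matching of converged shapes, up to strong bisimilarity. -/
def ConvMatch (d e : Res) : Prop :=
  (∃ σ, d = Res.ret σ ∧ e = Res.ret σ) ∨
  (∃ f g, d = Res.inp f ∧ e = Res.inp g ∧ ∀ v, Bisim (f v) (g v)) ∨
  (∃ v a b, d = Res.out v a ∧ e = Res.out v b ∧ Bisim a b)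

lemma conv_det {r d e} (h : Conv r d) (h' : Conv r e) : ConvMatch d e := by
  induction h with
  | ret σ => exact Or.inl ⟨σ, rfl, conv_ret_inv h'⟩
  | @inp f f₁ hb =>
    obtain ⟨g, rfl, hg⟩ := conv_inp_inv h'
    exact Or.inr (Or.inl ⟨f₁, g, rfl, rfl, fun v => bisim_trans (bisim_symm (hb v)) (hg v)⟩)
  | @out v a a₁ hb =>
    obtain ⟨b, rfl, hg⟩ := conv_out_inv h'
    exact Or.inr (Or.inr ⟨v, a₁, b, rfl, rfl, bisim_trans (bisim_symm hb) hg⟩)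
  | delay _ ih => exact ih (conv_delay_inv h')

/-- Transport of convergence along strong bisimilarity. -/
lemma conv_transport {r r₁ d} (hb : Bisim r r₁) (h : Conv r d) :
    ∃ e, Conv r₁ e ∧ ConvMatch d e := by
  induction h generalizing r₁ with
  | ret σ =>
    rcases bisim_unfold hb with ⟨σ', h1, h2⟩ | ⟨f, f₁, h1, _⟩ | ⟨v, a, a₁, h1, _⟩ | ⟨a, a₁, h1, _⟩
    · cases ret_inj h1; exact ⟨_, h2 ▸ Conv.ret σ, Or.inl ⟨σ, rfl, rfl⟩⟩
    · exact absurd h1 ret_ne_inp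
    · exact absurd h1 ret_ne_out
    · exact absurd h1 ret_ne_delay
  | @inp f f₁ hf =>
    rcases bisim_unfold hb with ⟨σ', h1, _⟩ | ⟨g, g₁, h1, h2, h3⟩ | ⟨v, a, a₁, h1, _⟩ | ⟨a, a₁, h1, _⟩
    · exact absurd h1.symm ret_ne_inp
    · cases inp_inj h1
      exact ⟨Res.inp g₁, h2 ▸ Conv.inp (fun v => bisim_refl _),
        Or.inr (Or.inl ⟨f₁, g₁, rfl, rfl, fun v => bisim_trans (bisim_symm (hf v)) (h3 v)⟩)⟩
    · exact absurd h1 inp_ne_out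
    · exact absurd h1 inp_ne_delay
  | @out v a a₁ ha =>
    rcases bisim_unfold hb with ⟨σ', h1, _⟩ | ⟨g, g₁, h1, _⟩ | ⟨w, b, b₁, h1, h2, h3⟩ | ⟨b, b₁, h1, _⟩
    · exact absurd h1.symm ret_ne_out
    · exact absurd h1.symm inp_ne_out
    · obtain ⟨hv, hab⟩ := out_inj h1; subst hv; subst hab
      exact ⟨Res.out v b₁, h2 ▸ Conv.out (bisim_refl _),
        Or.inr (Or.inr ⟨v, a₁, b₁, rfl, rfl, bisim_trans (bisim_symm ha) h3⟩)⟩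
    · exact absurd h1 out_ne_delay
  | @delay a d' hc ih =>
    rcases bisim_unfold hb with ⟨σ', h1, _⟩ | ⟨g, g₁, h1, _⟩ | ⟨w, b, b₁, h1, _⟩ | ⟨b, b₁, h1, h2, h3⟩
    · exact absurd h1.symm ret_ne_delay
    · exact absurd h1.symm inp_ne_delay
    · exact absurd h1.symm out_ne_delay
    · cases delay_inj h1
      obtain ⟨e, he, hm⟩ := ih h3
      exact ⟨e, h2 ▸ Conv.delay he, hm⟩

end WBProof
namespace WBProof

lemma wbisim_unfold {r r₁} (h : WBisim r r₁) : WBisimF WBisim r r₁ := by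
  obtain ⟨R, hR, hr⟩ := h
  rcases hR _ _ hr with ⟨σ, h1, h2⟩ | ⟨f, f₁, h1, h2, h3⟩ | ⟨v, a, a₁, h1, h2, h3⟩ | ⟨a, a₁, h1, h2, h3⟩
  · exact Or.inl ⟨σ, h1, h2⟩
  · exact Or.inr (Or.inl ⟨f, f₁, h1, h2, fun v => ⟨R, hR, h3 v⟩⟩)
  · exact Or.inr (Or.inr (Or.inl ⟨v, a, a₁, h1, h2, ⟨R, hR, h3⟩⟩))
  · exact Or.inr (Or.inr (Or.inr ⟨a, a₁, h1, h2, ⟨R, hR, h3⟩⟩))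

lemma wbisim_refl (r : Res) : WBisim r r := by
  refine ⟨Eq, fun x y hxy => ?_, rfl⟩
  cases hxy
  rcases shape_cases x with ⟨σ, h⟩ | ⟨f, h⟩ | ⟨v, a, h⟩ | ⟨a, h⟩
  · exact Or.inl ⟨σ, h ▸ Conv.ret σ, h ▸ Conv.ret σ⟩
  · exact Or.inr (Or.inl ⟨f, f, h ▸ Conv.inp (fun v => bisim_refl _),
      h ▸ Conv.inp (fun v => bisim_refl _), fun v => rfl⟩)
  · exact Or.inr (Or.inr (Or.inl ⟨v, a, a, h ▸ Conv.out (bisim_refl _),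
      h ▸ Conv.out (bisim_refl _), rfl⟩))
  · exact Or.inr (Or.inr (Or.inr ⟨a, a, h, h, rfl⟩))

lemma wbisim_symm {r r₁} (h : WBisim r r₁) : WBisim r₁ r := by
  obtain ⟨R, hR, hr⟩ := h
  refine ⟨fun x y => R y x, fun x y hxy => ?_, hr⟩
  rcases hR _ _ hxy with ⟨σ, h1, h2⟩ | ⟨f, f₁, h1, h2, h3⟩ | ⟨v, a, a₁, h1, h2, h3⟩ | ⟨a, a₁, h1, h2, h3⟩
  · exact Or.inl ⟨σ, h2, h1⟩
  · exact Or.inr (Or.inl ⟨f₁, f, h2, h1, fun v => h3 v⟩)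
  · exact Or.inr (Or.inr (Or.inl ⟨v, a₁, a, h2, h1, h3⟩))
  · exact Or.inr (Or.inr (Or.inr ⟨a₁, a, h2, h1, h3⟩))

/-- Strong bisimilarity composed with weak bisimilarity (on the left). -/
lemma bisim_comp_wbisim {r₀ r₁ r₂} (hb : Bisim r₀ r₁) (hw : WBisim r₁ r₂) : WBisim r₀ r₂ := by
  refine ⟨fun x z => ∃ y, Bisim x y ∧ WBisim y z, fun x z hxz => ?_, r₁, hb, hw⟩
  obtain ⟨y, hxy, hyz⟩ := hxz
  rcases wbisim_unfold hyz with ⟨σ, h1, h2⟩ | ⟨f, f₁, h1, h2, h3⟩ | ⟨v, a, a₁, h1, h2, h3⟩ | ⟨a, a₁, h1, h2, h3⟩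
  · obtain ⟨e, he, hm⟩ := conv_transport (bisim_symm hxy) h1
    rcases hm with ⟨σ', hd, he'⟩ | ⟨f, g, hd, _⟩ | ⟨v, a, b, hd, _⟩
    · cases ret_inj hd; exact Or.inl ⟨σ, he' ▸ he, h2⟩
    · exact absurd hd ret_ne_inp
    · exact absurd hd ret_ne_out
  · obtain ⟨e, he, hm⟩ := conv_transport (bisim_symm hxy) h1
    rcases hm with ⟨σ', hd, _⟩ | ⟨g, g₁, hd, he', hbg⟩ | ⟨v, a, b, hd, _⟩
    · exact absurd hd.symm ret_ne_inp
    · cases inp_inj hd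
      exact Or.inr (Or.inl ⟨g₁, f₁, he' ▸ he, h2,
        fun v => ⟨f v, bisim_symm (hbg v), h3 v⟩⟩)
    · exact absurd hd inp_ne_out
  · obtain ⟨e, he, hm⟩ := conv_transport (bisim_symm hxy) h1
    rcases hm with ⟨σ', hd, _⟩ | ⟨g, g₁, hd, _⟩ | ⟨w, b, b₁, hd, he', hbb⟩
    · exact absurd hd.symm ret_ne_out
    · exact absurd hd.symm inp_ne_out
    · obtain ⟨hv, hab⟩ := out_inj hd; subst hv; subst hab
      exact Or.inr (Or.inr (Or.inl ⟨v, b₁, a₁, he' ▸ he, h2, ⟨a, bisim_symm hbb, h3⟩⟩))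
  · subst h1
    rcases bisim_unfold hxy with ⟨σ', g1, g2⟩ | ⟨g, g₁, g1, g2, _⟩ | ⟨w, b, b₁, g1, g2, _⟩ | ⟨b, b₁, g1, g2, g3⟩
    · exact absurd g2.symm ret_ne_delay
    · exact absurd g2.symm inp_ne_delay
    · exact absurd g2.symm out_ne_delay
    · cases delay_inj g2
      exact Or.inr (Or.inr (Or.inr ⟨b, a₁, g1, h2, ⟨a, g3, h3⟩⟩))

lemma wbisim_comp_bisim {r₀ r₁ r₂} (hw : WBisim r₀ r₁) (hb : Bisim r₁ r₂) : WBisim r₀ r₂ :=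
  wbisim_symm (bisim_comp_wbisim (bisim_symm hb) (wbisim_symm hw))

/-- Matching of shapes, with weakly bisimilar continuations. -/
def WMatch (d e : Res) : Prop :=
  (∃ σ, d = Res.ret σ ∧ e = Res.ret σ) ∨
  (∃ f g, d = Res.inp f ∧ e = Res.inp g ∧ ∀ v, WBisim (f v) (g v)) ∨
  (∃ v a b, d = Res.out v a ∧ e = Res.out v b ∧ WBisim a b)

/-- Transport of convergence along weak bisimilarity. -/
lemma conv_transport_w {r r₁ d} (h : Conv r d) (hw : WBisim r r₁) :
    ∃ e, Conv r₁ e ∧ WMatch d e := by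
  induction h generalizing r₁ with
  | ret σ =>
    rcases wbisim_unfold hw with ⟨σ', h1, h2⟩ | ⟨f, f₁, h1, _⟩ | ⟨v, a, a₁, h1, _⟩ | ⟨a, a₁, h1, _⟩
    · cases ret_inj (conv_ret_inv h1)
      exact ⟨_, h2, Or.inl ⟨_, rfl, rfl⟩⟩
    · exact absurd (conv_ret_inv h1).symm ret_ne_inp
    · exact absurd (conv_ret_inv h1).symm ret_ne_out
    · exact absurd h1 ret_ne_delay
  | @inp f f₁ hf =>
    rcases wbisim_unfold hw with ⟨σ', h1, _⟩ | ⟨g, g₁, h1, h2, h3⟩ | ⟨v, a, a₁, h1, _⟩ | ⟨a, a₁, h1, _⟩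
    · obtain ⟨g', hg', _⟩ := conv_inp_inv h1
      exact absurd hg' ret_ne_inp
    · obtain ⟨g', hg', hbg⟩ := conv_inp_inv h1
      cases inp_inj hg'
      exact ⟨Res.inp g₁, h2, Or.inr (Or.inl ⟨f₁, g₁, rfl, rfl,
        fun v => bisim_comp_wbisim (bisim_trans (bisim_symm (hf v)) (hbg v)) (h3 v)⟩)⟩
    · obtain ⟨g', hg', _⟩ := conv_inp_inv h1
      exact absurd hg'.symm inp_ne_out
    · exact absurd h1 inp_ne_delay
  | @out v a a₁ ha =>
    rcases wbisim_unfold hw with ⟨σ', h1, _⟩ | ⟨g, g₁, h1, _⟩ | ⟨w, b, b₁, h1, h2, h3⟩ | ⟨b, b₁, h1, _⟩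
    · obtain ⟨a', ha', _⟩ := conv_out_inv h1
      exact absurd ha' ret_ne_out
    · obtain ⟨a', ha', _⟩ := conv_out_inv h1
      exact absurd ha' inp_ne_out
    · obtain ⟨b', hb', hbb⟩ := conv_out_inv h1
      obtain ⟨hv, hab⟩ := out_inj hb'; subst hv; subst hab
      exact ⟨Res.out _ b₁, h2, Or.inr (Or.inr ⟨_, a₁, b₁, rfl, rfl,
        bisim_comp_wbisim (bisim_trans (bisim_symm ha) hbb) h3⟩)⟩
    · exact absurd h1 out_ne_delay
  | @delay a d' hc ih =>
    rcases wbisim_unfold hw with ⟨σ', h1, h2⟩ | ⟨g, g₁, h1, h2, h3⟩ | ⟨w, b, b₁, h1, h2, h3⟩ | ⟨b, b₁, h1, h2, h3⟩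
    · have h1' := conv_delay_inv h1
      rcases conv_det hc h1' with ⟨τ, hd, he⟩ | ⟨f', g', hd, he, _⟩ | ⟨u, x, y, hd, he, _⟩
      · cases ret_inj he; exact ⟨_, h2, Or.inl ⟨_, hd, rfl⟩⟩
      · exact absurd he ret_ne_inp
      · exact absurd he ret_ne_out
    · have h1' := conv_delay_inv h1
      rcases conv_det hc h1' with ⟨τ, hd, he⟩ | ⟨f', g', hd, he, hfg⟩ | ⟨u, x, y, hd, he, _⟩
      · exact absurd he.symm ret_ne_inp
      · cases inp_inj he; subst hd
        exact ⟨Res.inp g₁, h2, Or.inr (Or.inl ⟨f', g₁, rfl, rfl,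
          fun v => bisim_comp_wbisim (hfg v) (h3 v)⟩)⟩
      · exact absurd he inp_ne_out
    · have h1' := conv_delay_inv h1
      rcases conv_det hc h1' with ⟨τ, hd, he⟩ | ⟨f', g', hd, he, _⟩ | ⟨u, x, y, hd, he, hxy⟩
      · exact absurd he.symm ret_ne_out
      · exact absurd he.symm inp_ne_out
      · obtain ⟨hu, hby⟩ := out_inj he; subst hu; subst hby; subst hd
        exact ⟨Res.out w b₁, h2, Or.inr (Or.inr ⟨w, x, b₁, rfl, rfl,
          bisim_comp_wbisim hxy h3⟩)⟩
    · cases delay_inj h1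
      obtain ⟨e, he, hm⟩ := ih h3
      exact ⟨e, h2 ▸ Conv.delay he, hm⟩

end WBProof
namespace WBProof

lemma wbisim_trans {r₀ r₁ r₂} (h : WBisim r₀ r₁) (h' : WBisim r₁ r₂) : WBisim r₀ r₂ := by
  refine ⟨fun x z => ∃ y, WBisim x y ∧ WBisim y z, fun x z hxz => ?_, r₁, h, h'⟩
  obtain ⟨y, hxy, hyz⟩ := hxz
  rcases wbisim_unfold hxy with ⟨σ, h1, h2⟩ | ⟨f, f₁, h1, h2, h3⟩ | ⟨v, a, a₁, h1, h2, h3⟩ | ⟨a, a₁, h1, h2, h3⟩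
  · obtain ⟨e, he, hm⟩ := conv_transport_w h2 hyz
    rcases hm with ⟨σ', hd, hee⟩ | ⟨f, g, hd, _⟩ | ⟨v, a, b, hd, _⟩
    · cases ret_inj hd
      exact Or.inl ⟨_, h1, hee ▸ he⟩
    · exact absurd hd ret_ne_inp
    · exact absurd hd ret_ne_out
  · obtain ⟨e, he, hm⟩ := conv_transport_w h2 hyz
    rcases hm with ⟨σ', hd, _⟩ | ⟨f', g, hd, hee, hw⟩ | ⟨v, a, b, hd, _⟩
    · exact absurd hd.symm ret_ne_inp
    · cases inp_inj hd
      exact Or.inr (Or.inl ⟨f, g, h1, hee ▸ he, fun v => ⟨f₁ v, h3 v, hw v⟩⟩)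
    · exact absurd hd inp_ne_out
  · obtain ⟨e, he, hm⟩ := conv_transport_w h2 hyz
    rcases hm with ⟨σ', hd, _⟩ | ⟨f', g, hd, _⟩ | ⟨w, a', b, hd, hee, hw⟩
    · exact absurd hd.symm ret_ne_out
    · exact absurd hd.symm inp_ne_out
    · obtain ⟨hv, ha⟩ := out_inj hd; subst hv; subst ha
      exact Or.inr (Or.inr (Or.inl ⟨_, a, b, h1, hee ▸ he, ⟨a₁, h3, hw⟩⟩))
  · subst h1; subst h2
    rcases wbisim_unfold hyz with ⟨σ, g1, g2⟩ | ⟨g, g₁, g1, g2, g3⟩ | ⟨w, b, b₁, g1, g2, g3⟩ | ⟨b, b₁, g1, g2, g3⟩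
    · obtain ⟨e, he, hm⟩ := conv_transport_w (conv_delay_inv g1) (wbisim_symm h3)
      rcases hm with ⟨σ', hd, hee⟩ | ⟨f', g', hd, _⟩ | ⟨v, x', y', hd, _⟩
      · cases ret_inj hd
        exact Or.inl ⟨_, Conv.delay (hee ▸ he), g2⟩
      · exact absurd hd ret_ne_inp
      · exact absurd hd ret_ne_out
    · obtain ⟨e, he, hm⟩ := conv_transport_w (conv_delay_inv g1) (wbisim_symm h3)
      rcases hm with ⟨σ', hd, _⟩ | ⟨f', g', hd, hee, hw⟩ | ⟨v, x', y', hd, _⟩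
      · exact absurd hd.symm ret_ne_inp
      · cases inp_inj hd
        exact Or.inr (Or.inl ⟨g', g₁, Conv.delay (hee ▸ he), g2,
          fun v => ⟨g v, wbisim_symm (hw v), g3 v⟩⟩)
      · exact absurd hd inp_ne_out
    · obtain ⟨e, he, hm⟩ := conv_transport_w (conv_delay_inv g1) (wbisim_symm h3)
      rcases hm with ⟨σ', hd, _⟩ | ⟨f', g', hd, _⟩ | ⟨v, x', y', hd, hee, hw⟩
      · exact absurd hd.symm ret_ne_out
      · exact absurd hd.symm inp_ne_out
      · obtain ⟨hv, hb⟩ := out_inj hd; subst hv; subst hb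
        exact Or.inr (Or.inr (Or.inl ⟨_, y', b₁, Conv.delay (hee ▸ he), g2,
          ⟨b, wbisim_symm hw, g3⟩⟩))
    · cases delay_inj g1
      exact Or.inr (Or.inr (Or.inr ⟨a, b₁, rfl, g2, ⟨a₁, h3, g3⟩⟩))

end WBProof

/-- Weak bisimilarity is an equivalence relation. -/
theorem wbisim_equivalence : Equivalence WBisim :=
  ⟨WBProof.wbisim_refl, WBProof.wbisim_symm, WBProof.wbisim_trans⟩
end
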